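/- Let ρ_S be a density matrix on ℂ^{d_S}, ρ_U a density matrix on ℂ^{d_U}, V a unitary on ℂ^{d_S} ⊗ ℂ^{d_U}, and σ = V (ρ_S ⊗ ρ_U) V†. Let Φ(X) = ∑_k K_k X K_k† be a quantum channel in Kraus form on d_S×d_S matrices with ∑_k K_k† K_k = 1, let β ≥ 0 and Q ∈ ℝ, and suppose the marginal second law S(Φ(tr_U σ)) − S(tr_U σ) − βQ ≥ 0 holds. Then the generalized second law of the repeated interaction framework holds: [S(Φ(tr_U σ)) − S(ρ_S)] + [S(tr_S σ) − S(ρ_U)] − βQ ≥ I(S:U)(σ) ≥ 0, i.e., the total change of the system and unit marginal entropies minus the entropy flow is bounded below by the system–unit mutual information built up by the interaction. -/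

import Mathlib

open Matrix
open scoped BigOperators Classical ComplexOrder Kronecker

/-- Von Neumann entropy of a matrix: `-∑ λᵢ log λᵢ` over its eigenvalues if it is
Hermitian, and `0` otherwise (junk value). -/
noncomputable def vnEntropy {n : Type*} [Fintype n] [DecidableEq n]
    (A : Matrix n n ℂ) : ℝ :=
  if hA : A.IsHermitian then ∑ i, Real.negMulLog (hA.eigenvalues i) else 0

/-- Partial trace over the second (unit) factor. -/
noncomputable def ptraceU {dS dU : ℕ}
    (ρ : Matrix (Fin dS × Fin dU) (Fin dS × Fin dU) ℂ) : Matrix (Fin dS) (Fin dS) ℂ :=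
  fun s s' => ∑ u, ρ (s, u) (s', u)

/-- Partial trace over the first (system) factor. -/
noncomputable def ptraceS {dS dU : ℕ}
    (ρ : Matrix (Fin dS × Fin dU) (Fin dS × Fin dU) ℂ) : Matrix (Fin dU) (Fin dU) ℂ :=
  fun u u' => ∑ s, ρ (s, u) (s, u')

/-- Quantum mutual information `I(S:U) = S(ρ_S) + S(ρ_U) − S(ρ_SU)` of a bipartite state. -/
noncomputable def mutualInfo {dS dU : ℕ}
    (ρ : Matrix (Fin dS × Fin dU) (Fin dS × Fin dU) ℂ) : ℝ :=
  vnEntropy (ptraceU ρ) + vnEntropy (ptraceS ρ) - vnEntropy ρ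

/-! ### Auxiliary lemmas -/

/-- Jensen + double stochasticity: mixing increases entropy. -/
lemma aux_jensen {n : Type*} [Fintype n] (B : n → n → ℝ) (p : n → ℝ)
    (hBnn : ∀ j i, 0 ≤ B j i) (hrow : ∀ j, ∑ i, B j i = 1) (hcol : ∀ i, ∑ j, B j i = 1)
    (hp : ∀ i, 0 ≤ p i) :
    ∑ i, Real.negMulLog (p i) ≤ ∑ j, Real.negMulLog (∑ i, B j i * p i) := by
  have h1 : ∀ j, ∑ i, B j i * Real.negMulLog (p i) ≤ Real.negMulLog (∑ i, B j i * p i) := by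
    intro j
    have := Real.concaveOn_negMulLog.le_map_sum (t := Finset.univ) (w := B j) (p := p)
      (fun i _ => hBnn j i) (hrow j) (fun i _ => hp i)
    simpa [smul_eq_mul] using this
  calc ∑ i, Real.negMulLog (p i) = ∑ i, (∑ j, B j i) * Real.negMulLog (p i) := by
        simp [hcol]
    _ = ∑ j, ∑ i, B j i * Real.negMulLog (p i) := by
        rw [Finset.sum_comm]
        simp [Finset.sum_mul]
    _ ≤ ∑ j, Real.negMulLog (∑ i, B j i * p i) := Finset.sum_le_sum fun j _ => h1 j

lemma aux_diag_conj {n : Type*} [Fintype n] [DecidableEq n]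
    (M : Matrix n n ℂ) (p : n → ℝ) (j : n) :
    (M * diagonal (fun i => (p i : ℂ)) * Mᴴ) j j
      = ((∑ i, Complex.normSq (M j i) * p i : ℝ) : ℂ) := by
  push_cast
  rw [Matrix.mul_apply]
  simp only [Matrix.mul_diagonal, Matrix.conjTranspose_apply]
  refine Finset.sum_congr rfl fun k _ => ?_
  rw [show M j k * (p k : ℂ) * star (M j k) = (M j k * star (M j k)) * (p k : ℂ) by ring]
  rw [Complex.star_def, Complex.mul_conj]

lemma aux_row_sum {n : Type*} [Fintype n] [DecidableEq n]
    (M : Matrix n n ℂ) (h : M * Mᴴ = 1) (j : n) :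
    ∑ i, Complex.normSq (M j i) = 1 := by
  have h1 : (M * Mᴴ) j j = 1 := by rw [h]; simp
  rw [Matrix.mul_apply] at h1
  have : ((∑ i, Complex.normSq (M j i) : ℝ) : ℂ) = 1 := by
    push_cast
    rw [← h1]
    refine Finset.sum_congr rfl fun k _ => ?_
    rw [Matrix.conjTranspose_apply, Complex.star_def, Complex.mul_conj]
  exact_mod_cast this

lemma aux_col_sum {n : Type*} [Fintype n] [DecidableEq n]
    (M : Matrix n n ℂ) (h : Mᴴ * M = 1) (i : n) :
    ∑ j, Complex.normSq (M j i) = 1 := by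
  have := aux_row_sum Mᴴ (by rwa [Matrix.conjTranspose_conjTranspose]) i
  simpa [Matrix.conjTranspose_apply, Complex.normSq_conj] using this

/-- Entropy of eigenvalues is at most the entropy of the diagonal after unitary conjugation. -/
lemma aux_entropy_le_diag {n : Type*} [Fintype n] [DecidableEq n]
    (M : Matrix n n ℂ) (hM : Mᴴ * M = 1) (hM' : M * Mᴴ = 1)
    (p : n → ℝ) (hp : ∀ i, 0 ≤ p i) :
    ∑ i, Real.negMulLog (p i)
      ≤ ∑ j, Real.negMulLog ((M * diagonal (fun i => (p i : ℂ)) * Mᴴ) j j).re := by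
  have hd : ∀ j, ((M * diagonal (fun i => (p i : ℂ)) * Mᴴ) j j).re
      = ∑ i, Complex.normSq (M j i) * p i := by
    intro j; rw [aux_diag_conj]; exact Complex.ofReal_re _
  simp only [hd]
  exact aux_jensen (fun j i => Complex.normSq (M j i)) p
    (fun j i => Complex.normSq_nonneg _) (aux_row_sum M hM') (aux_col_sum M hM) hp

section B
variable {n : Type*} [Fintype n] [DecidableEq n]

lemma aux_psd_conj_diagonal (W : Matrix n n ℂ) (p : n → ℝ) (hp : ∀ i, 0 ≤ p i) :
    (W * diagonal (fun i => (p i : ℂ)) * Wᴴ).PosSemidef :=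
  (Matrix.posSemidef_diagonal_iff.mpr fun i => Complex.zero_le_real.mpr (hp i)
    ).mul_mul_conjTranspose_same W

lemma aux_trace_conj_diagonal (W : Matrix n n ℂ) (hW : Wᴴ * W = 1) (d : n → ℂ) :
    (W * diagonal d * Wᴴ).trace = ∑ i, d i := by
  rw [Matrix.trace_mul_cycle, hW, Matrix.one_mul, Matrix.trace_diagonal]

lemma aux_diag_entry_nonneg {A : Matrix n n ℂ} (h : A.PosSemidef) (i : n) :
    0 ≤ A i i := by
  exact h.diag_nonneg

lemma aux_spectral {A : Matrix n n ℂ} (hA : A.IsHermitian) :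
    A = (hA.eigenvectorUnitary : Matrix n n ℂ)
        * diagonal (fun i => ((hA.eigenvalues i : ℝ) : ℂ))
        * (hA.eigenvectorUnitary : Matrix n n ℂ)ᴴ := by
  rw [← Matrix.star_eq_conjTranspose]
  exact hA.spectral_theorem

lemma aux_diagized {A : Matrix n n ℂ} (hA : A.IsHermitian) :
    (hA.eigenvectorUnitary : Matrix n n ℂ)ᴴ * A * (hA.eigenvectorUnitary : Matrix n n ℂ)
      = diagonal (fun i => ((hA.eigenvalues i : ℝ) : ℂ)) := by
  rw [← Matrix.star_eq_conjTranspose]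
  have := hA.conjStarAlgAut_star_eigenvectorUnitary
  rw [Unitary.conjStarAlgAut_star_apply] at this
  exact this

lemma aux_unit1 {A : Matrix n n ℂ} (hA : A.IsHermitian) :
    (hA.eigenvectorUnitary : Matrix n n ℂ)ᴴ * (hA.eigenvectorUnitary : Matrix n n ℂ) = 1 := by
  rw [← Matrix.star_eq_conjTranspose]
  exact Unitary.coe_star_mul_self hA.eigenvectorUnitary

lemma aux_unit2 {A : Matrix n n ℂ} (hA : A.IsHermitian) :
    (hA.eigenvectorUnitary : Matrix n n ℂ) * (hA.eigenvectorUnitary : Matrix n n ℂ)ᴴ = 1 := by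
  rw [← Matrix.star_eq_conjTranspose]
  exact Unitary.coe_mul_star_self hA.eigenvectorUnitary

set_option maxHeartbeats 1600000 in
/-- Von Neumann entropy of a unitary conjugate of a nonnegative diagonal matrix. -/
lemma aux_vnEntropy_conj_diagonal (W : Matrix n n ℂ) (hW : Wᴴ * W = 1) (hW' : W * Wᴴ = 1)
    (p : n → ℝ) (hp : ∀ i, 0 ≤ p i) :
    vnEntropy (W * diagonal (fun i => (p i : ℂ)) * Wᴴ) = ∑ i, Real.negMulLog (p i) := by
  set A := W * diagonal (fun i => (p i : ℂ)) * Wᴴ with hAdef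
  have hPSD : A.PosSemidef := aux_psd_conj_diagonal W p hp
  have hA : A.IsHermitian := hPSD.1
  rw [vnEntropy, dif_pos hA]
  set U : Matrix n n ℂ := (hA.eigenvectorUnitary : Matrix n n ℂ) with hUdef
  have hU1 : Uᴴ * U = 1 := aux_unit1 hA
  have hU2 : U * Uᴴ = 1 := aux_unit2 hA
  have hdiagA : Uᴴ * A * U = diagonal (fun i => ((hA.eigenvalues i : ℝ) : ℂ)) := aux_diagized hA
  set M : Matrix n n ℂ := Uᴴ * W with hMdef
  have hM1 : Mᴴ * M = 1 := by
    rw [hMdef, Matrix.conjTranspose_mul, Matrix.conjTranspose_conjTranspose, Matrix.mul_assoc,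
      ← Matrix.mul_assoc U, hU2, Matrix.one_mul, hW]
  have hM2 : M * Mᴴ = 1 := by
    rw [hMdef, Matrix.conjTranspose_mul, Matrix.conjTranspose_conjTranspose,
      Matrix.mul_assoc, ← Matrix.mul_assoc W, hW', Matrix.one_mul, hU1]
  have e1 : M * diagonal (fun i => (p i : ℂ)) * Mᴴ
      = diagonal (fun i => ((hA.eigenvalues i : ℝ) : ℂ)) := by
    rw [← hdiagA, hAdef, hMdef, Matrix.conjTranspose_mul, Matrix.conjTranspose_conjTranspose]
    simp only [Matrix.mul_assoc]
  have e2 : Mᴴ * diagonal (fun i => ((hA.eigenvalues i : ℝ) : ℂ)) * M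
      = diagonal (fun i => (p i : ℂ)) := by
    rw [← e1]
    simp only [Matrix.mul_assoc]
    rw [hM1, Matrix.mul_one, ← Matrix.mul_assoc, hM1, Matrix.one_mul]
  have heig : ∀ i, 0 ≤ hA.eigenvalues i := hPSD.eigenvalues_nonneg
  have le1 : ∑ i, Real.negMulLog (p i) ≤ ∑ i, Real.negMulLog (hA.eigenvalues i) := by
    have := aux_entropy_le_diag M hM1 hM2 p hp
    simp only [e1, Matrix.diagonal_apply_eq, Complex.ofReal_re] at this
    exact this
  have le2 : ∑ i, Real.negMulLog (hA.eigenvalues i) ≤ ∑ i, Real.negMulLog (p i) := by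
    have h1 : (Mᴴ)ᴴ * Mᴴ = 1 := by rwa [Matrix.conjTranspose_conjTranspose]
    have h2 : Mᴴ * (Mᴴ)ᴴ = 1 := by rwa [Matrix.conjTranspose_conjTranspose]
    have := aux_entropy_le_diag Mᴴ h1 h2 hA.eigenvalues heig
    rw [Matrix.conjTranspose_conjTranspose] at this
    simp only [e2, Matrix.diagonal_apply_eq, Complex.ofReal_re] at this
    exact this
  linarith

/-- Entropy is at most diagonal entropy in any unitary basis. -/
lemma aux_vnEntropy_le_diag (W : Matrix n n ℂ) (hW : Wᴴ * W = 1) (hW' : W * Wᴴ = 1)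
    (p : n → ℝ) (hp : ∀ i, 0 ≤ p i)
    (P : Matrix n n ℂ) (hP : Pᴴ * P = 1) (hP' : P * Pᴴ = 1) :
    vnEntropy (W * diagonal (fun i => (p i : ℂ)) * Wᴴ)
      ≤ ∑ j, Real.negMulLog ((Pᴴ * (W * diagonal (fun i => (p i : ℂ)) * Wᴴ) * P) j j).re := by
  rw [aux_vnEntropy_conj_diagonal W hW hW' p hp]
  have hMeq : Pᴴ * (W * diagonal (fun i => (p i : ℂ)) * Wᴴ) * P
      = (Pᴴ * W) * diagonal (fun i => (p i : ℂ)) * (Pᴴ * W)ᴴ := by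
    rw [Matrix.conjTranspose_mul, Matrix.conjTranspose_conjTranspose]
    simp only [Matrix.mul_assoc]
  rw [hMeq]
  have h1 : (Pᴴ * W)ᴴ * (Pᴴ * W) = 1 := by
    rw [Matrix.conjTranspose_mul, Matrix.conjTranspose_conjTranspose, Matrix.mul_assoc,
      ← Matrix.mul_assoc P Pᴴ W, hP', Matrix.one_mul, hW]
  have h2 : (Pᴴ * W) * (Pᴴ * W)ᴴ = 1 := by
    rw [Matrix.conjTranspose_mul, Matrix.conjTranspose_conjTranspose, Matrix.mul_assoc,
      ← Matrix.mul_assoc W Wᴴ P, hW', Matrix.one_mul, hP]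
  exact aux_entropy_le_diag (Pᴴ * W) h1 h2 p hp

end B

/-- Classical subadditivity of Shannon entropy for a joint distribution. -/
lemma aux_classical_subadd {m k : Type*} [Fintype m] [Fintype k]
    (q : m × k → ℝ) (hq : ∀ x, 0 ≤ q x) (hsum : ∑ x, q x = 1) :
    ∑ x, Real.negMulLog (q x)
      ≤ (∑ s, Real.negMulLog (∑ u, q (s, u))) + ∑ u, Real.negMulLog (∑ s, q (s, u)) := by
  set p : m → ℝ := fun s => ∑ u, q (s, u) with hpdef
  set r : k → ℝ := fun u => ∑ s, q (s, u) with hrdef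
  have hp : ∀ s, 0 ≤ p s := fun s => Finset.sum_nonneg fun u _ => hq _
  have hr : ∀ u, 0 ≤ r u := fun u => Finset.sum_nonneg fun s _ => hq _
  have hps : ∑ s, p s = 1 := by rw [← hsum, Fintype.sum_prod_type]
  have hrs : ∑ u, r u = 1 := by rw [← hsum, Fintype.sum_prod_type_right]
  have hqp : ∀ s u, q (s, u) ≤ p s := fun s u =>
    Finset.single_le_sum (f := fun u => q (s, u)) (fun u _ => hq _) (Finset.mem_univ u)
  have hqr : ∀ s u, q (s, u) ≤ r u := fun s u =>
    Finset.single_le_sum (f := fun s => q (s, u)) (fun s _ => hq _) (Finset.mem_univ s)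
  have key : ∀ s u, Real.negMulLog (q (s, u))
      ≤ q (s, u) * (-Real.log (p s)) + q (s, u) * (-Real.log (r u))
        + (p s * r u - q (s, u)) := by
    intro s u
    rcases eq_or_lt_of_le (hq (s, u)) with h0 | h0
    · rw [← h0]
      simp only [Real.negMulLog_zero, zero_mul, sub_zero, zero_add, add_zero]
      exact mul_nonneg (hp s) (hr u)
    · have hps' : 0 < p s := lt_of_lt_of_le h0 (hqp s u)
      have hrs' : 0 < r u := lt_of_lt_of_le h0 (hqr s u)
      have hlog : Real.log (p s * r u / q (s, u)) ≤ p s * r u / q (s, u) - 1 :=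
        Real.log_le_sub_one_of_pos (by positivity)
      have hexp : Real.log (p s * r u / q (s, u))
          = Real.log (p s) + Real.log (r u) - Real.log (q (s, u)) := by
        rw [Real.log_div (by positivity) (ne_of_gt h0),
          Real.log_mul (ne_of_gt hps') (ne_of_gt hrs')]
      rw [hexp] at hlog
      have hmul := mul_le_mul_of_nonneg_left hlog (le_of_lt h0)
      have hne : q (s, u) ≠ 0 := ne_of_gt h0
      have hq2 : q (s, u) * (p s * r u / q (s, u) - 1) = p s * r u - q (s, u) := by
        field_simp
      rw [hq2] at hmul
      simp only [Real.negMulLog_def]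
      nlinarith [hmul]
  have hsum2 : ∑ x : m × k, (q x * (-Real.log (p x.1)) + q x * (-Real.log (r x.2))
      + (p x.1 * r x.2 - q x))
      = (∑ s, Real.negMulLog (p s)) + ∑ u, Real.negMulLog (r u) := by
    rw [Finset.sum_add_distrib, Finset.sum_add_distrib]
    have e1 : ∑ x : m × k, q x * (-Real.log (p x.1)) = ∑ s, Real.negMulLog (p s) := by
      rw [Fintype.sum_prod_type]
      refine Finset.sum_congr rfl fun s _ => ?_
      show ∑ y, q (s, y) * -Real.log (p s) = _
      rw [← Finset.sum_mul]
      show p s * -Real.log (p s) = _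
      rw [Real.negMulLog_def]
      ring
    have e2 : ∑ x : m × k, q x * (-Real.log (r x.2)) = ∑ u, Real.negMulLog (r u) := by
      rw [Fintype.sum_prod_type_right]
      refine Finset.sum_congr rfl fun u _ => ?_
      show ∑ x, q (x, u) * -Real.log (r u) = _
      rw [← Finset.sum_mul]
      show r u * -Real.log (r u) = _
      rw [Real.negMulLog_def]
      ring
    have e3 : ∑ x : m × k, (p x.1 * r x.2 - q x) = 0 := by
      rw [Finset.sum_sub_distrib, hsum]
      rw [Fintype.sum_prod_type]
      simp_rw [← Finset.mul_sum]
      rw [← Finset.sum_mul, hps, hrs]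
      norm_num
    rw [e1, e2, e3, add_zero]
  calc ∑ x, Real.negMulLog (q x)
      ≤ ∑ x : m × k, (q x * (-Real.log (p x.1)) + q x * (-Real.log (r x.2))
          + (p x.1 * r x.2 - q x)) := Finset.sum_le_sum fun x _ => key x.1 x.2
    _ = _ := hsum2

/-- Entropy of a product distribution. -/
lemma aux_negMulLog_prod {m k : Type*} [Fintype m] [Fintype k]
    (p : m → ℝ) (r : k → ℝ) (hps : ∑ s, p s = 1) (hrs : ∑ u, r u = 1) :
    ∑ x : m × k, Real.negMulLog (p x.1 * r x.2)
      = (∑ s, Real.negMulLog (p s)) + ∑ u, Real.negMulLog (r u) := by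
  have : ∀ x : m × k, Real.negMulLog (p x.1 * r x.2)
      = r x.2 * Real.negMulLog (p x.1) + p x.1 * Real.negMulLog (r x.2) :=
    fun x => Real.negMulLog_mul _ _
  simp_rw [this]
  rw [Finset.sum_add_distrib, Fintype.sum_prod_type, Fintype.sum_prod_type]
  have e1 : ∑ s, ∑ u, r u * Real.negMulLog (p s) = ∑ s, Real.negMulLog (p s) := by
    refine Finset.sum_congr rfl fun s _ => ?_
    rw [← Finset.sum_mul, hrs, one_mul]
  have e2 : ∑ s, ∑ u, p s * Real.negMulLog (r u) = ∑ s, p s * ∑ u, Real.negMulLog (r u) := by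
    refine Finset.sum_congr rfl fun s _ => ?_
    rw [← Finset.mul_sum]
  rw [e1, e2, ← Finset.sum_mul, hps, one_mul]

lemma aux_kron_conjTranspose {m k : Type*} [Fintype m] [Fintype k]
    (A : Matrix m m ℂ) (B : Matrix k k ℂ) : (A ⊗ₖ B)ᴴ = Aᴴ ⊗ₖ Bᴴ := by
  ext x y
  simp [Matrix.conjTranspose_apply, Matrix.kroneckerMap_apply, star_mul', mul_comm]

lemma aux_expand_entry {dS dU : ℕ}
    (σ : Matrix (Fin dS × Fin dU) (Fin dS × Fin dU) ℂ)
    (P : Matrix (Fin dS) (Fin dS) ℂ) (Q : Matrix (Fin dU) (Fin dU) ℂ)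
    (s s' : Fin dS) (u u' : Fin dU) :
    ((P ⊗ₖ Q)ᴴ * σ * (P ⊗ₖ Q)) (s, u) (s', u')
      = ∑ x : Fin dS × Fin dU, ∑ y : Fin dS × Fin dU,
          (star (P x.1 s) * σ x y * P y.1 s') * (star (Q x.2 u) * Q y.2 u') := by
  simp only [Matrix.mul_apply, Matrix.conjTranspose_apply, Finset.sum_mul]
  rw [Finset.sum_comm]
  refine Finset.sum_congr rfl fun x _ => Finset.sum_congr rfl fun y _ => ?_
  simp only [Matrix.kroneckerMap_apply, star_mul']
  ring

lemma aux_delta_QQ {dU : ℕ} (Q : Matrix (Fin dU) (Fin dU) ℂ) (hQ : Q * Qᴴ = 1)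
    (b b' : Fin dU) : ∑ u, star (Q b u) * Q b' u = if b' = b then 1 else 0 := by
  have h1 : (Q * Qᴴ) b' b = (1 : Matrix (Fin dU) (Fin dU) ℂ) b' b := by rw [hQ]
  rw [Matrix.mul_apply] at h1
  simp only [Matrix.conjTranspose_apply] at h1
  rw [Matrix.one_apply] at h1
  rw [← h1]
  exact Finset.sum_congr rfl fun u _ => mul_comm _ _

lemma aux_ptraceU_conj {dS dU : ℕ}
    (σ : Matrix (Fin dS × Fin dU) (Fin dS × Fin dU) ℂ)
    (P : Matrix (Fin dS) (Fin dS) ℂ) (Q : Matrix (Fin dU) (Fin dU) ℂ)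
    (hQ : Q * Qᴴ = 1) :
    ptraceU ((P ⊗ₖ Q)ᴴ * σ * (P ⊗ₖ Q)) = Pᴴ * ptraceU σ * P := by
  ext s s'
  show ∑ u, ((P ⊗ₖ Q)ᴴ * σ * (P ⊗ₖ Q)) (s, u) (s', u) = _
  calc ∑ u, ((P ⊗ₖ Q)ᴴ * σ * (P ⊗ₖ Q)) (s, u) (s', u)
      = ∑ u, ∑ x : Fin dS × Fin dU, ∑ y : Fin dS × Fin dU,
          (star (P x.1 s) * σ x y * P y.1 s') * (star (Q x.2 u) * Q y.2 u) :=
        Finset.sum_congr rfl fun u _ => aux_expand_entry σ P Q s s' u u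
    _ = ∑ x : Fin dS × Fin dU, ∑ y : Fin dS × Fin dU,
          (star (P x.1 s) * σ x y * P y.1 s') * (∑ u, star (Q x.2 u) * Q y.2 u) := by
        rw [Finset.sum_comm]
        refine Finset.sum_congr rfl fun x _ => ?_
        rw [Finset.sum_comm]
        refine Finset.sum_congr rfl fun y _ => ?_
        rw [← Finset.mul_sum]
    _ = ∑ x : Fin dS × Fin dU, ∑ y : Fin dS × Fin dU,
          (star (P x.1 s) * σ x y * P y.1 s') * (if y.2 = x.2 then 1 else 0) := by
        refine Finset.sum_congr rfl fun x _ => Finset.sum_congr rfl fun y _ => ?_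
        rw [aux_delta_QQ Q hQ]
    _ = ∑ x : Fin dS × Fin dU, ∑ a', star (P x.1 s) * σ x (a', x.2) * P a' s' := by
        refine Finset.sum_congr rfl fun x _ => ?_
        rw [Fintype.sum_prod_type]
        refine Finset.sum_congr rfl fun a' _ => ?_
        simp [Finset.sum_ite_eq', mul_ite]
    _ = ∑ a', ∑ x : Fin dS × Fin dU, star (P x.1 s) * σ x (a', x.2) * P a' s' :=
        Finset.sum_comm
    _ = (Pᴴ * ptraceU σ * P) s s' := by
        simp only [Matrix.mul_apply, Matrix.conjTranspose_apply, ptraceU,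
          Finset.sum_mul, Finset.mul_sum]
        refine Finset.sum_congr rfl fun a' _ => ?_
        rw [Fintype.sum_prod_type]

lemma aux_ptraceS_conj {dS dU : ℕ}
    (σ : Matrix (Fin dS × Fin dU) (Fin dS × Fin dU) ℂ)
    (P : Matrix (Fin dS) (Fin dS) ℂ) (Q : Matrix (Fin dU) (Fin dU) ℂ)
    (hP : P * Pᴴ = 1) :
    ptraceS ((P ⊗ₖ Q)ᴴ * σ * (P ⊗ₖ Q)) = Qᴴ * ptraceS σ * Q := by
  ext u u'
  show ∑ s, ((P ⊗ₖ Q)ᴴ * σ * (P ⊗ₖ Q)) (s, u) (s, u') = _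
  calc ∑ s, ((P ⊗ₖ Q)ᴴ * σ * (P ⊗ₖ Q)) (s, u) (s, u')
      = ∑ s, ∑ x : Fin dS × Fin dU, ∑ y : Fin dS × Fin dU,
          (star (Q x.2 u) * σ x y * Q y.2 u') * (star (P x.1 s) * P y.1 s) := by
        refine Finset.sum_congr rfl fun s _ => ?_
        rw [aux_expand_entry σ P Q s s u u']
        refine Finset.sum_congr rfl fun x _ => Finset.sum_congr rfl fun y _ => ?_
        ring
    _ = ∑ x : Fin dS × Fin dU, ∑ y : Fin dS × Fin dU,
          (star (Q x.2 u) * σ x y * Q y.2 u') * (∑ s, star (P x.1 s) * P y.1 s) := by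
        rw [Finset.sum_comm]
        refine Finset.sum_congr rfl fun x _ => ?_
        rw [Finset.sum_comm]
        refine Finset.sum_congr rfl fun y _ => ?_
        rw [← Finset.mul_sum]
    _ = ∑ x : Fin dS × Fin dU, ∑ y : Fin dS × Fin dU,
          (star (Q x.2 u) * σ x y * Q y.2 u') * (if y.1 = x.1 then 1 else 0) := by
        refine Finset.sum_congr rfl fun x _ => Finset.sum_congr rfl fun y _ => ?_
        rw [aux_delta_QQ P hP]
    _ = ∑ x : Fin dS × Fin dU, ∑ b', star (Q x.2 u) * σ x (x.1, b') * Q b' u' := by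
        refine Finset.sum_congr rfl fun x _ => ?_
        rw [Fintype.sum_prod_type]
        rw [Finset.sum_comm]
        refine Finset.sum_congr rfl fun b' _ => ?_
        simp [Finset.sum_ite_eq', mul_ite]
    _ = ∑ b', ∑ x : Fin dS × Fin dU, star (Q x.2 u) * σ x (x.1, b') * Q b' u' :=
        Finset.sum_comm
    _ = (Qᴴ * ptraceS σ * Q) u u' := by
        simp only [Matrix.mul_apply, Matrix.conjTranspose_apply, ptraceS,
          Finset.sum_mul, Finset.mul_sum]
        refine Finset.sum_congr rfl fun b' _ => ?_
        rw [Fintype.sum_prod_type]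
        rw [Finset.sum_comm]

/-- The generalized second law of the repeated interaction framework: the total change
of the system and unit marginal entropies minus the entropy flow is bounded below by
the system–unit mutual information built up by the unitary interaction. -/
theorem generalized_second_law_repeated_interaction
    {dS dU : ℕ} {κ : Type*} [Fintype κ]
    (ρS : Matrix (Fin dS) (Fin dS) ℂ) (hρS : ρS.PosSemidef) (hρStr : ρS.trace = 1)
    (ρU : Matrix (Fin dU) (Fin dU) ℂ) (hρU : ρU.PosSemidef) (hρUtr : ρU.trace = 1)
    (V : Matrix (Fin dS × Fin dU) (Fin dS × Fin dU) ℂ)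
    (hV : Vᴴ * V = 1) (hV' : V * Vᴴ = 1)
    (σ : Matrix (Fin dS × Fin dU) (Fin dS × Fin dU) ℂ)
    (hσ : σ = V * (ρS ⊗ₖ ρU) * Vᴴ)
    (K : κ → Matrix (Fin dS) (Fin dS) ℂ)
    (hK : ∑ k, (K k)ᴴ * K k = 1)
    (β Q : ℝ) (hβ : 0 ≤ β)
    (hmarg : 0 ≤ vnEntropy (∑ k, K k * ptraceU σ * (K k)ᴴ)
        - vnEntropy (ptraceU σ) - β * Q) :
    mutualInfo σ ≤ (vnEntropy (∑ k, K k * ptraceU σ * (K k)ᴴ) - vnEntropy ρS)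
        + (vnEntropy (ptraceS σ) - vnEntropy ρU) - β * Q
      ∧ 0 ≤ mutualInfo σ := by
  have hρSH : ρS.IsHermitian := hρS.1
  have hρUH : ρU.IsHermitian := hρU.1
  set US : Matrix (Fin dS) (Fin dS) ℂ := (hρSH.eigenvectorUnitary : Matrix (Fin dS) (Fin dS) ℂ)
    with hUSdef
  set UU : Matrix (Fin dU) (Fin dU) ℂ := (hρUH.eigenvectorUnitary : Matrix (Fin dU) (Fin dU) ℂ)
    with hUUdef
  set pS : Fin dS → ℝ := hρSH.eigenvalues with hpSdef
  set pU : Fin dU → ℝ := hρUH.eigenvalues with hpUdef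
  have hUS1 : USᴴ * US = 1 := aux_unit1 hρSH
  have hUS2 : US * USᴴ = 1 := aux_unit2 hρSH
  have hUU1 : UUᴴ * UU = 1 := aux_unit1 hρUH
  have hUU2 : UU * UUᴴ = 1 := aux_unit2 hρUH
  have hρSspec : ρS = US * diagonal (fun i => (pS i : ℂ)) * USᴴ := aux_spectral hρSH
  have hρUspec : ρU = UU * diagonal (fun i => (pU i : ℂ)) * UUᴴ := aux_spectral hρUH
  have hpSnn : ∀ i, 0 ≤ pS i := hρS.eigenvalues_nonneg
  have hpUnn : ∀ i, 0 ≤ pU i := hρU.eigenvalues_nonneg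
  -- sums of eigenvalues are 1
  have hpSsum : ∑ i, pS i = 1 := by
    have h1 : ρS.trace = ∑ i, ((pS i : ℝ) : ℂ) := by
      rw [hρSspec]; exact aux_trace_conj_diagonal US hUS1 _
    rw [hρStr] at h1
    have : ((∑ i, pS i : ℝ) : ℂ) = 1 := by push_cast; rw [h1]
    exact_mod_cast this
  have hpUsum : ∑ i, pU i = 1 := by
    have h1 : ρU.trace = ∑ i, ((pU i : ℝ) : ℂ) := by
      rw [hρUspec]; exact aux_trace_conj_diagonal UU hUU1 _
    rw [hρUtr] at h1
    have : ((∑ i, pU i : ℝ) : ℂ) = 1 := by push_cast; rw [h1]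
    exact_mod_cast this
  -- the joint state as a unitary conjugate of a diagonal matrix
  set μ : Fin dS × Fin dU → ℝ := fun x => pS x.1 * pU x.2 with hμdef
  have hμnn : ∀ x, 0 ≤ μ x := fun x => mul_nonneg (hpSnn _) (hpUnn _)
  set W : Matrix (Fin dS × Fin dU) (Fin dS × Fin dU) ℂ := V * (US ⊗ₖ UU) with hWdef
  have hK1 : (US ⊗ₖ UU)ᴴ * (US ⊗ₖ UU) = 1 := by
    rw [aux_kron_conjTranspose, ← Matrix.mul_kronecker_mul, hUS1, hUU1,
      Matrix.one_kronecker_one]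
  have hK2 : (US ⊗ₖ UU) * (US ⊗ₖ UU)ᴴ = 1 := by
    rw [aux_kron_conjTranspose, ← Matrix.mul_kronecker_mul, hUS2, hUU2,
      Matrix.one_kronecker_one]
  have hW1 : Wᴴ * W = 1 := by
    rw [hWdef, Matrix.conjTranspose_mul, Matrix.mul_assoc,
      ← Matrix.mul_assoc Vᴴ V _, hV, Matrix.one_mul, hK1]
  have hW2 : W * Wᴴ = 1 := by
    rw [hWdef, Matrix.conjTranspose_mul, Matrix.mul_assoc,
      ← Matrix.mul_assoc (US ⊗ₖ UU) _ Vᴴ, hK2, Matrix.one_mul, hV']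
  have hσspec : σ = W * diagonal (fun x => (μ x : ℂ)) * Wᴴ := by
    rw [hσ, hρSspec, hρUspec, hWdef]
    rw [Matrix.conjTranspose_mul]
    have hkron : (US * diagonal (fun i => (pS i : ℂ)) * USᴴ)
          ⊗ₖ (UU * diagonal (fun i => (pU i : ℂ)) * UUᴴ)
        = (US ⊗ₖ UU) * diagonal (fun x => (μ x : ℂ)) * (US ⊗ₖ UU)ᴴ := by
      rw [Matrix.mul_kronecker_mul, Matrix.mul_kronecker_mul, aux_kron_conjTranspose,
        Matrix.diagonal_kronecker_diagonal]
      have he : (fun mn : Fin dS × Fin dU => (pS mn.1 : ℂ) * (pU mn.2 : ℂ))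
          = fun x : Fin dS × Fin dU => ((μ x : ℝ) : ℂ) := by
        funext x
        rw [hμdef]
        push_cast
        rfl
      rw [he]
    rw [hkron]
    simp only [Matrix.mul_assoc]
  have hσPSD : σ.PosSemidef := by
    rw [hσspec]; exact aux_psd_conj_diagonal W μ hμnn
  have hσH : σ.IsHermitian := hσPSD.1
  -- entropy of σ equals the sum of the entropies of ρS and ρU
  have hSσ : vnEntropy σ
      = (∑ i, Real.negMulLog (pS i)) + ∑ i, Real.negMulLog (pU i) := by
    rw [hσspec, aux_vnEntropy_conj_diagonal W hW1 hW2 μ hμnn]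
    exact aux_negMulLog_prod pS pU hpSsum hpUsum
  have hSρS : vnEntropy ρS = ∑ i, Real.negMulLog (pS i) := by
    rw [hρSspec]; exact aux_vnEntropy_conj_diagonal US hUS1 hUS2 pS hpSnn
  have hSρU : vnEntropy ρU = ∑ i, Real.negMulLog (pU i) := by
    rw [hρUspec]; exact aux_vnEntropy_conj_diagonal UU hUU1 hUU2 pU hpUnn
  -- marginals
  have hAH : (ptraceU σ).IsHermitian := by
    refine Matrix.ext fun s s' => ?_
    rw [Matrix.conjTranspose_apply]
    show star (∑ u, σ (s', u) (s, u)) = ∑ u, σ (s, u) (s', u)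
    rw [star_sum]
    refine Finset.sum_congr rfl fun u _ => ?_
    rw [← Matrix.conjTranspose_apply, hσH]
  have hBH : (ptraceS σ).IsHermitian := by
    refine Matrix.ext fun u u' => ?_
    rw [Matrix.conjTranspose_apply]
    show star (∑ s, σ (s, u') (s, u)) = ∑ s, σ (s, u) (s, u')
    rw [star_sum]
    refine Finset.sum_congr rfl fun s _ => ?_
    rw [← Matrix.conjTranspose_apply, hσH]
  set P : Matrix (Fin dS) (Fin dS) ℂ := (hAH.eigenvectorUnitary : Matrix (Fin dS) (Fin dS) ℂ)
    with hPdef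
  set Qm : Matrix (Fin dU) (Fin dU) ℂ := (hBH.eigenvectorUnitary : Matrix (Fin dU) (Fin dU) ℂ)
    with hQmdef
  set pA : Fin dS → ℝ := hAH.eigenvalues with hpAdef
  set rB : Fin dU → ℝ := hBH.eigenvalues with hrBdef
  have hP1 : Pᴴ * P = 1 := aux_unit1 hAH
  have hP2 : P * Pᴴ = 1 := aux_unit2 hAH
  have hQ1 : Qmᴴ * Qm = 1 := aux_unit1 hBH
  have hQ2 : Qm * Qmᴴ = 1 := aux_unit2 hBH
  have hAdiag : Pᴴ * ptraceU σ * P = diagonal (fun s => (pA s : ℂ)) := aux_diagized hAH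
  have hBdiag : Qmᴴ * ptraceS σ * Qm = diagonal (fun u => (rB u : ℂ)) := aux_diagized hBH
  set T : Matrix (Fin dS × Fin dU) (Fin dS × Fin dU) ℂ := P ⊗ₖ Qm with hTdef
  have hT1 : Tᴴ * T = 1 := by
    rw [hTdef, aux_kron_conjTranspose, ← Matrix.mul_kronecker_mul, hP1, hQ1,
      Matrix.one_kronecker_one]
  have hT2 : T * Tᴴ = 1 := by
    rw [hTdef, aux_kron_conjTranspose, ← Matrix.mul_kronecker_mul, hP2, hQ2,
      Matrix.one_kronecker_one]
  set q : Fin dS × Fin dU → ℝ := fun x => ((Tᴴ * σ * T) x x).re with hqdef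
  have hσ'PSD : (Tᴴ * σ * T).PosSemidef := hσPSD.conjTranspose_mul_mul_same T
  have hq0 : ∀ x, 0 ≤ q x := fun x => (Complex.le_def.mp (aux_diag_entry_nonneg hσ'PSD x)).1
  have hq_margU : ∀ s, ∑ u, q (s, u) = pA s := by
    intro s
    have h1 : ∑ u, (Tᴴ * σ * T) (s, u) (s, u) = (Pᴴ * ptraceU σ * P) s s := by
      rw [← aux_ptraceU_conj σ P Qm hQ2]; rfl
    have h2 : ∑ u, q (s, u) = (∑ u, (Tᴴ * σ * T) (s, u) (s, u)).re := by
      rw [Complex.re_sum]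
    rw [h2, h1, hAdiag, Matrix.diagonal_apply_eq, Complex.ofReal_re]
  have hq_margS : ∀ u, ∑ s, q (s, u) = rB u := by
    intro u
    have h1 : ∑ s, (Tᴴ * σ * T) (s, u) (s, u) = (Qmᴴ * ptraceS σ * Qm) u u := by
      rw [← aux_ptraceS_conj σ P Qm hP2]; rfl
    have h2 : ∑ s, q (s, u) = (∑ s, (Tᴴ * σ * T) (s, u) (s, u)).re := by
      rw [Complex.re_sum]
    rw [h2, h1, hBdiag, Matrix.diagonal_apply_eq, Complex.ofReal_re]
  -- trace of ptraceU σ is 1, so ∑ pA = 1, and hence ∑ q = 1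
  have htrσ : σ.trace = 1 := by
    rw [hσspec, aux_trace_conj_diagonal W hW1]
    have : ∑ x : Fin dS × Fin dU, ((μ x : ℝ) : ℂ) = ((∑ x, μ x : ℝ) : ℂ) := by push_cast; rfl
    rw [this]
    have : ∑ x : Fin dS × Fin dU, μ x = 1 := by
      rw [hμdef, Fintype.sum_prod_type]
      simp_rw [← Finset.mul_sum]
      rw [← Finset.sum_mul, hpSsum, hpUsum]
      norm_num
    rw [this]
    norm_num
  have htrA : (ptraceU σ).trace = 1 := by
    rw [← htrσ, Matrix.trace, Matrix.trace]
    rw [Fintype.sum_prod_type]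
    rfl
  have hpAsum : ∑ s, pA s = 1 := by
    have h1 : (ptraceU σ).trace = ∑ s, ((pA s : ℝ) : ℂ) := by
      rw [aux_spectral hAH]
      exact aux_trace_conj_diagonal P hP1 _
    rw [htrA] at h1
    have : ((∑ s, pA s : ℝ) : ℂ) = 1 := by push_cast; rw [h1]
    exact_mod_cast this
  have hqsum : ∑ x, q x = 1 := by
    rw [Fintype.sum_prod_type]
    calc ∑ s, ∑ u, q (s, u) = ∑ s, pA s := Finset.sum_congr rfl fun s _ => hq_margU s
      _ = 1 := hpAsum
  -- entropies of the marginals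
  have hSA : vnEntropy (ptraceU σ) = ∑ s, Real.negMulLog (pA s) := by
    rw [vnEntropy, dif_pos hAH]
  have hSB : vnEntropy (ptraceS σ) = ∑ u, Real.negMulLog (rB u) := by
    rw [vnEntropy, dif_pos hBH]
  -- subadditivity
  have hsub : vnEntropy σ ≤ vnEntropy (ptraceU σ) + vnEntropy (ptraceS σ) := by
    have hle1 : vnEntropy σ ≤ ∑ x, Real.negMulLog (q x) := by
      have := aux_vnEntropy_le_diag W hW1 hW2 μ hμnn T hT1 hT2
      rw [← hσspec] at this
      exact this
    have hle2 : ∑ x, Real.negMulLog (q x)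
        ≤ (∑ s, Real.negMulLog (pA s)) + ∑ u, Real.negMulLog (rB u) := by
      have := aux_classical_subadd q hq0 hqsum
      simp_rw [hq_margU, hq_margS] at this
      exact this
    rw [hSA, hSB]
    linarith
  have hmi : mutualInfo σ
      = vnEntropy (ptraceU σ) + vnEntropy (ptraceS σ) - vnEntropy σ := rfl
  constructor
  · rw [hmi, hSρS, hSρU, hSσ]
    linarith [hmarg]
  · rw [hmi]
    linarith [hsub]
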